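/- Every equi-constrained equilibrium e of the interval consensus dynamics (e_m in the interior of ℝ∖[p_m,q_m] for all m) is locally asymptotically stable when N_i ≠ ∅ for all i: in a neighborhood of e, the dynamics reduces to d(x−e)/dt = −D(x−e) with D the positive diagonal degree matrix, which is exponentially stable. -/

import Mathlib

open Finset Filter

/-- Saturation of `z` onto the interval `[p, q]`. -/
noncomputable def sat (p q z : ℝ) : ℝ := max p (min z q)

lemma sat_lip (p q a b : ℝ) : |sat p q a - sat p q b| ≤ |a - b| := by
  unfold sat
  rw [max_comm p, max_comm p (min b q)]
  refine (abs_max_sub_max_le_abs _ _ _).trans ?_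
  refine (abs_min_sub_min_le_max a q b q).trans ?_
  simp [abs_nonneg]

/-- Every equi-constrained equilibrium (each `e m` strictly outside `[p m, q m]`)
is locally asymptotically stable, provided every node has a neighbor. -/
theorem equi_constrained_locally_asymptotically_stable
    (n : ℕ) (a : Fin (n + 1) → Fin (n + 1) → ℝ) (ha : ∀ i j, 0 ≤ a i j)
    (hN : ∀ i, ∃ j, 0 < a i j)
    (p q : Fin (n + 1) → ℝ) (hpq : ∀ m, p m ≤ q m)
    (e : Fin (n + 1) → ℝ)
    (he : ∀ i, ∑ j, a i j * (sat (p j) (q j) (e j) - e i) = 0)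
    (hconstr : ∀ m, e m < p m ∨ q m < e m) :
    (∀ δ > (0 : ℝ), ∃ ε > (0 : ℝ), ∀ x : ℝ → Fin (n + 1) → ℝ,
      (∀ i t, HasDerivAt (fun s => x s i)
        (∑ j, a i j * (sat (p j) (q j) (x t j) - x t i)) t) →
      dist (x 0) e ≤ ε → ∀ t ≥ (0 : ℝ), dist (x t) e ≤ δ) ∧
    (∃ ε > (0 : ℝ), ∀ x : ℝ → Fin (n + 1) → ℝ,
      (∀ i t, HasDerivAt (fun s => x s i)
        (∑ j, a i j * (sat (p j) (q j) (x t j) - x t i)) t) →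
      dist (x 0) e ≤ ε → Tendsto (fun t => x t) atTop (nhds e)) := by
  classical
  set c : Fin (n + 1) → ℝ := fun j => sat (p j) (q j) (e j) with hc
  set D : Fin (n + 1) → ℝ := fun i => ∑ j, a i j with hD
  have hD0 : ∀ i, 0 < D i := by
    intro i
    obtain ⟨j, hj⟩ := hN i
    exact Finset.sum_pos' (fun k _ => ha i k) ⟨j, Finset.mem_univ j, hj⟩
  have hDe : ∀ i, ∑ j, a i j * c j = D i * e i := by
    intro i
    have h := he i
    have h2 : ∑ j, a i j * (c j - e i) = (∑ j, a i j * c j) - D i * e i := by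
      simp [mul_sub, Finset.sum_sub_distrib, hD, Finset.sum_mul]
    rw [h] at h2
    linarith
  -- the gap
  set G : ℝ := Finset.univ.inf' Finset.univ_nonempty (fun j => |e j - c j|) with hG
  have hcval : ∀ j, (e j < p j → c j = p j) ∧ (q j < e j → c j = q j) := by
    intro j
    constructor
    · intro h
      simp only [hc, sat]
      rw [min_eq_left (le_of_lt (lt_of_lt_of_le h (hpq j))), max_eq_left h.le]
    · intro h
      simp only [hc, sat]
      rw [min_eq_right h.le, max_eq_right (hpq j)]
  have hGpos : 0 < G := by
    rw [hG, Finset.lt_inf'_iff]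
    intro j _
    rcases hconstr j with h | h
    · rw [(hcval j).1 h]
      rw [abs_sub_comm, abs_of_pos (by linarith)]; linarith
    · rw [(hcval j).2 h]
      rw [abs_of_pos (by linarith)]; linarith
  have hGle : ∀ j, G ≤ |e j - c j| := fun j => Finset.inf'_le _ (Finset.mem_univ j)
  -- sat is locally constant near e
  have hsat : ∀ (w : ℝ) (j : Fin (n + 1)), |w - e j| ≤ G / 2 → sat (p j) (q j) w = c j := by
    intro w j hw
    have habs := abs_le.1 hw
    rcases hconstr j with h | h
    · have hcj := (hcval j).1 h
      have : G ≤ p j - e j := by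
        have := hGle j; rw [hcj, abs_sub_comm, abs_of_pos (by linarith)] at this; linarith
      have hwp : w ≤ p j := by linarith [habs.2]
      rw [hcj]
      simp only [sat]
      rw [min_eq_left (hwp.trans (hpq j)), max_eq_left hwp]
    · have hcj := (hcval j).2 h
      have : G ≤ e j - q j := by
        have := hGle j; rw [hcj, abs_of_pos (by linarith)] at this; linarith
      have hwq : q j ≤ w := by linarith [habs.1]
      rw [hcj]
      simp only [sat]
      rw [min_eq_right hwq, max_eq_right (hpq j)]
  -- the vector field and its Lipschitz property
  set v : ℝ → (Fin (n + 1) → ℝ) → (Fin (n + 1) → ℝ) :=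
    fun _ w i => ∑ j, a i j * (sat (p j) (q j) (w j) - w i) with hv
  set Dmax : ℝ := Finset.univ.sup' Finset.univ_nonempty D with hDmax
  have hDmaxle : ∀ i, D i ≤ Dmax := fun i => Finset.le_sup' _ (Finset.mem_univ i)
  have hDmaxpos : 0 < Dmax := (hD0 ⟨0, Nat.succ_pos n⟩).trans_le (hDmaxle _)
  set K : NNReal := Real.toNNReal (2 * Dmax) with hK
  have hKcoe : (K : ℝ) = 2 * Dmax := Real.coe_toNNReal _ (by linarith)
  have hlip : ∀ t, LipschitzWith K (v t) := by
    intro t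
    apply LipschitzWith.of_dist_le_mul
    intro w u
    rw [dist_pi_le_iff (by positivity)]
    intro i
    rw [Real.dist_eq, hv]
    simp only
    rw [← Finset.sum_sub_distrib]
    refine (Finset.abs_sum_le_sum_abs _ _).trans ?_
    have hterm : ∀ j : Fin (n + 1),
        |a i j * (sat (p j) (q j) (w j) - w i) - a i j * (sat (p j) (q j) (u j) - u i)|
          ≤ a i j * (2 * dist w u) := by
      intro j
      rw [← mul_sub, abs_mul, abs_of_nonneg (ha i j)]
      have h1 : |sat (p j) (q j) (w j) - sat (p j) (q j) (u j)| ≤ dist w u := by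
        refine (sat_lip _ _ _ _).trans ?_
        rw [← Real.dist_eq]; exact dist_le_pi_dist w u j
      have h2 : |w i - u i| ≤ dist w u := by
        rw [← Real.dist_eq]; exact dist_le_pi_dist w u i
      have : |sat (p j) (q j) (w j) - w i - (sat (p j) (q j) (u j) - u i)|
          ≤ |sat (p j) (q j) (w j) - sat (p j) (q j) (u j)| + |w i - u i| := by
        have := abs_sub (sat (p j) (q j) (w j) - sat (p j) (q j) (u j)) (w i - u i)
        calc _ = |(sat (p j) (q j) (w j) - sat (p j) (q j) (u j)) + -(w i - u i)| := by
              congr 1; ring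
          _ ≤ |sat (p j) (q j) (w j) - sat (p j) (q j) (u j)| + |-(w i - u i)| := abs_add_le _ _
          _ = _ := by rw [abs_neg]
      refine mul_le_mul_of_nonneg_left ?_ (ha i j)
      linarith
    refine (Finset.sum_le_sum fun j _ => hterm j).trans ?_
    rw [← Finset.sum_mul, hKcoe]
    have : (∑ j, a i j) ≤ Dmax := hDmaxle i
    have hd : (0:ℝ) ≤ dist w u := dist_nonneg
    nlinarith [hd]
  -- the key solution formula
  have key : ∀ x : ℝ → Fin (n + 1) → ℝ,
      (∀ i t, HasDerivAt (fun s => x s i)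
        (∑ j, a i j * (sat (p j) (q j) (x t j) - x t i)) t) →
      dist (x 0) e ≤ G / 2 → ∀ t ≥ (0:ℝ), ∀ i,
        x t i = e i + (x 0 i - e i) * Real.exp (-(D i * t)) := by
    intro x hx hx0 T hT
    set z : ℝ → Fin (n + 1) → ℝ :=
      fun t i => e i + (x 0 i - e i) * Real.exp (-(D i * t)) with hz
    have hy0 : ∀ j, |x 0 j - e j| ≤ G / 2 := by
      intro j
      rw [← Real.dist_eq]
      exact (dist_le_pi_dist (x 0) e j).trans hx0
    -- z stays in the ball and satisfies the ODE for t ≥ 0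
    have hzball : ∀ t ≥ (0:ℝ), ∀ j, |z t j - e j| ≤ G / 2 := by
      intro t ht j
      simp only [hz, add_sub_cancel_left, abs_mul, Real.abs_exp]
      calc |x 0 j - e j| * Real.exp (-(D j * t))
          ≤ |x 0 j - e j| * 1 := by
            gcongr
            exact Real.exp_le_one_iff.2 (by nlinarith [hD0 j])
        _ ≤ G / 2 := by rw [mul_one]; exact hy0 j
    have hzderiv : ∀ t ≥ (0:ℝ), HasDerivAt z (v t (z t)) t := by
      intro t ht
      rw [hasDerivAt_pi]
      intro i
      have hde : HasDerivAt (fun s => z s i)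
          ((x 0 i - e i) * (Real.exp (-(D i * t)) * (-(D i)))) t := by
        have h1 : HasDerivAt (fun s : ℝ => -(D i * s)) (-(D i)) t := by
          have h := (hasDerivAt_id t).const_mul (-(D i))
          simp only [id, id_eq, mul_one, neg_mul] at h
          exact h
        exact ((h1.exp).const_mul (x 0 i - e i)).const_add (e i)
      refine hde.congr_deriv ?_
      symm
      have hsatz : ∀ j, sat (p j) (q j) (z t j) = c j := fun j => hsat _ j (hzball t ht j)
      show ∑ j, a i j * (sat (p j) (q j) (z t j) - z t i) = _
      calc ∑ j, a i j * (sat (p j) (q j) (z t j) - z t i)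
          = ∑ j, a i j * (c j - z t i) := by
            refine Finset.sum_congr rfl fun j _ => ?_
            rw [hsatz j]
        _ = (∑ j, a i j * c j) - D i * z t i := by
            simp [mul_sub, Finset.sum_sub_distrib, hD, Finset.sum_mul]
        _ = D i * e i - D i * z t i := by rw [hDe i]
        _ = (x 0 i - e i) * (Real.exp (-(D i * t)) * (-(D i))) := by
            simp only [hz]; ring
    have hxderiv : ∀ t, HasDerivAt x (v t (x t)) t := by
      intro t
      rw [hasDerivAt_pi]
      intro i
      exact hx i t
    have hxcont : ContinuousOn x (Set.Icc 0 T) :=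
      (continuous_pi fun i =>
        Differentiable.continuous (fun t => (hx i t).differentiableAt)).continuousOn
    have hzcont : ContinuousOn z (Set.Icc 0 T) := by
      apply Continuous.continuousOn
      apply continuous_pi
      intro i
      fun_prop
    have h0 : x 0 = z 0 := by
      funext i
      simp [hz]
    have := ODE_solution_unique hlip hxcont
      (fun t ht => (hxderiv t).hasDerivWithinAt) hzcont
      (fun t ht => (hzderiv t ht.1).hasDerivWithinAt) h0
    have hteq := this ⟨hT, le_refl T⟩
    intro i
    rw [hteq]
  constructor
  · -- stability
    intro δ hδ
    refine ⟨min δ (G / 2), lt_min hδ (by linarith), ?_⟩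
    intro x hx hx0 t ht
    have hx0' : dist (x 0) e ≤ G / 2 := hx0.trans (min_le_right _ _)
    have hxt := key x hx hx0' t ht
    rw [dist_pi_le_iff hδ.le]
    intro i
    rw [Real.dist_eq, hxt i]
    have h1 : |x 0 i - e i| ≤ min δ (G / 2) := by
      rw [← Real.dist_eq]
      exact (dist_le_pi_dist (x 0) e i).trans hx0
    calc |e i + (x 0 i - e i) * Real.exp (-(D i * t)) - e i|
        = |x 0 i - e i| * Real.exp (-(D i * t)) := by
          rw [show e i + (x 0 i - e i) * Real.exp (-(D i * t)) - e i
              = (x 0 i - e i) * Real.exp (-(D i * t)) by ring, abs_mul, Real.abs_exp]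
      _ ≤ |x 0 i - e i| * 1 :=
          mul_le_mul_of_nonneg_left (Real.exp_le_one_iff.2 (by nlinarith [hD0 i])) (abs_nonneg _)
      _ ≤ δ := by rw [mul_one]; exact h1.trans (min_le_left _ _)
  · -- asymptotic stability
    refine ⟨G / 2, by linarith, ?_⟩
    intro x hx hx0
    have hxt := key x hx hx0
    have hz : Tendsto (fun t => (fun i => e i + (x 0 i - e i) * Real.exp (-(D i * t))))
        atTop (nhds e) := by
      rw [tendsto_pi_nhds]
      intro i
      have hexp : Tendsto (fun t : ℝ => Real.exp (-(D i * t))) atTop (nhds 0) := by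
        apply Real.tendsto_exp_atBot.comp
        apply tendsto_neg_atTop_atBot.comp
        exact Tendsto.const_mul_atTop (hD0 i) tendsto_id
      have h2 := (hexp.const_mul (x 0 i - e i)).const_add (e i)
      simpa using h2
    apply hz.congr'
    filter_upwards [eventually_ge_atTop (0:ℝ)] with t ht
    exact funext fun i => (hxt t ht i).symm
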